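/- Construct E on a periodic N_x×N_y staggered grid by the initialization scheme: with ρ̄_j = (1/N_x)Σ_i ρ_{ij}, set E_{i,1/2} = 0 and ε_{i,j+1/2}E_{i,j+1/2} = ε_{i,j-1/2}E_{i,j-1/2} + Δy·ρ̄_j for j = 1,…,N_y-1; then set E_{1/2,j} = 0 and ε_{i+1/2,j}E_{i+1/2,j} = ε_{i-1/2,j}E_{i-1/2,j} + Δx(ρ_{ij} - ρ̄_j) for i = 1,…,N_x-1. If Σ_{i,j} ρ_{ij} = 0, then the resulting periodic field E satisfies the discrete Gauss's law ∇_h·(εE) = ρ at every node. -/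

import Mathlib

lemma zmod_sum_range (N : ℕ) [NeZero N] (g : ZMod N → ℝ) :
    ∑ i : ZMod N, g i = ∑ k ∈ Finset.range N, g (k : ZMod N) := by
  refine Finset.sum_nbij' (fun i => (ZMod.val i : ℕ)) (fun k => (k : ZMod N)) ?_ ?_ ?_ ?_ ?_
  · intro a _; exact Finset.mem_range.mpr (ZMod.val_lt a)
  · intro a _; exact Finset.mem_univ _
  · intro a _; exact ZMod.natCast_rightInverse a
  · intro a ha; exact ZMod.val_cast_of_lt (Finset.mem_range.mp ha)
  · intro a _; rw [ZMod.natCast_rightInverse a]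

lemma key (N : ℕ) [NeZero N] (f g : ZMod N → ℝ)
    (hf0 : f 0 = 0)
    (hrec : ∀ i : ℕ, 1 ≤ i → i ≤ N - 1 → f (i : ZMod N) = f ((i - 1 : ℕ) : ZMod N) + g (i : ZMod N))
    (hg : ∑ i : ZMod N, g i = 0) :
    ∀ m : ZMod N, f m - f (m - 1) = g m := by
  have hN : 1 ≤ N := Nat.one_le_iff_ne_zero.mpr (NeZero.ne N)
  have closed : ∀ i : ℕ, i ≤ N - 1 → f (i : ZMod N) = ∑ k ∈ Finset.Icc 1 i, g (k : ZMod N) := by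
    intro i
    induction i with
    | zero => intro _; simpa using hf0
    | succ i ih =>
      intro hi
      rw [hrec (i+1) (Nat.le_add_left 1 i) hi]
      simp only [Nat.add_sub_cancel]
      rw [ih (le_trans (Nat.le_succ i) hi)]
      rw [Finset.sum_Icc_succ_top (Nat.le_add_left 1 i)]
  intro m
  by_cases hm : m = 0
  · subst hm
    have hneg : (-1 : ZMod N) = ((N - 1 : ℕ) : ZMod N) := by
      have : ((N : ℕ) : ZMod N) = 0 := ZMod.natCast_self N
      push_cast [Nat.cast_sub hN]
      rw [this]; ring
    have h1 : f (0 - 1) = ∑ k ∈ Finset.Icc 1 (N-1), g (k : ZMod N) := by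
      rw [zero_sub, hneg]; exact closed (N-1) le_rfl
    have h2 : ∑ k ∈ Finset.range N, g (k : ZMod N) = 0 := by
      rw [← zmod_sum_range]; exact hg
    have h3 : Finset.range N = insert 0 (Finset.Icc 1 (N-1)) := by
      ext k
      simp [Finset.mem_range, Finset.mem_Icc, Nat.lt_iff_le_pred (Nat.pos_of_ne_zero (NeZero.ne N))]
      omega
    rw [h3, Finset.sum_insert (by simp)] at h2
    have : g 0 + ∑ k ∈ Finset.Icc 1 (N-1), g (k : ZMod N) = 0 := by simpa using h2
    rw [hf0, h1]
    linarith
  · have hv1 : 1 ≤ m.val := Nat.one_le_iff_ne_zero.mpr (fun h => hm (by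
      have := ZMod.natCast_rightInverse m
      rw [← this, h]; simp))
    have hv2 : m.val ≤ N - 1 := Nat.le_sub_one_of_lt (ZMod.val_lt m)
    have := hrec m.val hv1 hv2
    have hc : ((m.val : ℕ) : ZMod N) = m := ZMod.natCast_rightInverse m
    have hc2 : ((m.val - 1 : ℕ) : ZMod N) = m - 1 := by
      push_cast [Nat.cast_sub hv1]
      rw [hc]
    rw [hc, hc2] at this
    linarith




/-- Discrete divergence of `εE` at node `(m,n)` on a periodic `Nx×Ny` staggered grid:
`Ex m n = E_{m+1/2,n}`, `Ey m n = E_{m,n+1/2}`. -/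
noncomputable def ddiv2 {Nx Ny : ℕ} (Δx Δy : ℝ)
    (εx εy Ex Ey : ZMod Nx → ZMod Ny → ℝ) (m : ZMod Nx) (n : ZMod Ny) : ℝ :=
  (εx m n * Ex m n - εx (m - 1) n * Ex (m - 1) n) / Δx +
    (εy m n * Ey m n - εy m (n - 1) * Ey m (n - 1)) / Δy

theorem stmt19 {Nx Ny : ℕ} [NeZero Nx] [NeZero Ny]
    (Δx Δy : ℝ) (hΔx : 0 < Δx) (hΔy : 0 < Δy)
    (εx εy : ZMod Nx → ZMod Ny → ℝ)
    (hεx : ∀ a b, 0 < εx a b) (hεy : ∀ a b, 0 < εy a b)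
    (ρ : ZMod Nx → ZMod Ny → ℝ)
    (hρ : ∑ i : ZMod Nx, ∑ j : ZMod Ny, ρ i j = 0)
    (ρbar : ZMod Ny → ℝ) (hρbar : ∀ j, ρbar j = (∑ i : ZMod Nx, ρ i j) / Nx)
    (Ex Ey : ZMod Nx → ZMod Ny → ℝ)
    -- initialization of the y-component: E_{i,1/2} = 0 and the vertical recursion
    (hEy0 : ∀ i : ZMod Nx, Ey i 0 = 0)
    (hEyrec : ∀ i : ZMod Nx, ∀ j : ℕ, 1 ≤ j → j ≤ Ny - 1 →
      εy i (j : ZMod Ny) * Ey i (j : ZMod Ny) =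
        εy i ((j - 1 : ℕ) : ZMod Ny) * Ey i ((j - 1 : ℕ) : ZMod Ny) + Δy * ρbar (j : ZMod Ny))
    -- initialization of the x-component: E_{1/2,j} = 0 and the horizontal recursion
    (hEx0 : ∀ j : ZMod Ny, Ex 0 j = 0)
    (hExrec : ∀ j : ZMod Ny, ∀ i : ℕ, 1 ≤ i → i ≤ Nx - 1 →
      εx (i : ZMod Nx) j * Ex (i : ZMod Nx) j =
        εx ((i - 1 : ℕ) : ZMod Nx) j * Ex ((i - 1 : ℕ) : ZMod Nx) j +
          Δx * (ρ (i : ZMod Nx) j - ρbar j)) :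
    ∀ (m : ZMod Nx) (n : ZMod Ny), ddiv2 Δx Δy εx εy Ex Ey m n = ρ m n := by
  intro m n
  have hNx : (Nx : ℝ) ≠ 0 := Nat.cast_ne_zero.mpr (NeZero.ne Nx)
  have hcard : (Finset.univ : Finset (ZMod Nx)).card = Nx := by
    simp [ZMod.card]
  -- x-direction
  have hx : εx m n * Ex m n - εx (m - 1) n * Ex (m - 1) n = Δx * (ρ m n - ρbar n) := by
    have := key Nx (fun m => εx m n * Ex m n) (fun m => Δx * (ρ m n - ρbar n))
      (by simp [hEx0]) (fun i h1 h2 => hExrec n i h1 h2) ?_ m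
    · exact this
    · have : ∑ i : ZMod Nx, (ρ i n - ρbar n) = 0 := by
        rw [Finset.sum_sub_distrib, Finset.sum_const, hcard, hρbar n]
        field_simp
        rw [nsmul_eq_mul, mul_div_assoc', mul_div_cancel_left₀ _ hNx, sub_self]
      rw [← Finset.mul_sum, this, mul_zero]
  -- y-direction
  have hy : εy m n * Ey m n - εy m (n - 1) * Ey m (n - 1) = Δy * ρbar n := by
    have := key Ny (fun n => εy m n * Ey m n) (fun n => Δy * ρbar n)
      (by simp [hEy0]) (fun j h1 h2 => hEyrec m j h1 h2) ?_ n
    · exact this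
    · have hsum : ∑ j : ZMod Ny, ρbar j = 0 := by
        have : ∑ j : ZMod Ny, ρbar j = (∑ j : ZMod Ny, ∑ i : ZMod Nx, ρ i j) / Nx := by
          rw [Finset.sum_div]
          exact Finset.sum_congr rfl fun j _ => hρbar j
        rw [this, Finset.sum_comm, hρ, zero_div]
      rw [← Finset.mul_sum, hsum, mul_zero]
  unfold ddiv2
  rw [hx, hy]
  field_simp
  ring
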